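/- Let Φ be a quantum channel on Matrix (Fin n) (Fin n) ℂ. Then there exist m ≥ 1, a unitary matrix U ∈ Matrix ((Fin n) × (Fin m)) ((Fin n) × (Fin m)) ℂ, and a density matrix ρ_E ∈ Matrix (Fin m) (Fin m) ℂ such that for every ρ ∈ Matrix (Fin n) (Fin n) ℂ one has Φ(ρ) = tr₂(U * (ρ ⊗ₖ ρ_E) * Uᴴ) (Stinespring dilation). -/

import Mathlib

open scoped Kronecker ComplexOrder Matrix

noncomputable section

/-- The block of `M` at position `(a, b)` when `M` is viewed as a block matrix indexed by
`Fin k × Fin n`. -/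
def blockAt {k n : ℕ} (M : Matrix (Fin k × Fin n) (Fin k × Fin n) ℂ) (a b : Fin k) :
    Matrix (Fin n) (Fin n) ℂ :=
  Matrix.of fun i j => M (a, i) (b, j)

/-- The extension `id_k ⊗ Φ` of a linear map `Φ` acting blockwise on block matrices. -/
def matExtend {n : ℕ} (k : ℕ) (Φ : Matrix (Fin n) (Fin n) ℂ →ₗ[ℂ] Matrix (Fin n) (Fin n) ℂ)
    (M : Matrix (Fin k × Fin n) (Fin k × Fin n) ℂ) :
    Matrix (Fin k × Fin n) (Fin k × Fin n) ℂ :=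
  ∑ a : Fin k, ∑ b : Fin k,
    (Matrix.single a b (1 : ℂ)) ⊗ₖ Φ (blockAt M a b)

/-- Completely positive linear map. -/
def IsCompletelyPositive {n : ℕ}
    (Φ : Matrix (Fin n) (Fin n) ℂ →ₗ[ℂ] Matrix (Fin n) (Fin n) ℂ) : Prop :=
  ∀ k : ℕ, 1 ≤ k → ∀ M : Matrix (Fin k × Fin n) (Fin k × Fin n) ℂ,
    M.PosSemidef → (matExtend k Φ M).PosSemidef

/-- Trace preserving linear map. -/
def IsTracePreserving {n : ℕ}
    (Φ : Matrix (Fin n) (Fin n) ℂ →ₗ[ℂ] Matrix (Fin n) (Fin n) ℂ) : Prop :=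
  ∀ X, (Φ X).trace = X.trace

/-- The partial trace over the second tensor factor. -/
def ptrace2 {n m : ℕ} (M : Matrix (Fin n × Fin m) (Fin n × Fin m) ℂ) :
    Matrix (Fin n) (Fin n) ℂ :=
  Matrix.of fun i j => ∑ k : Fin m, M (i, k) (j, k)

/-- auxiliary: the maximally entangled (unnormalized) matrix -/
def omegaM (n : ℕ) : Matrix (Fin n × Fin n) (Fin n × Fin n) ℂ :=
  Matrix.of fun p q => (if p.1 = p.2 then (1:ℂ) else 0) * (if q.1 = q.2 then (1:ℂ) else 0)

lemma omegaM_posSemidef (n : ℕ) : (omegaM n).PosSemidef := by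
  have : omegaM n = (Matrix.of fun (_ : Unit) (p : Fin n × Fin n) =>
      (if p.1 = p.2 then (1:ℂ) else 0))ᴴ *
      (Matrix.of fun (_ : Unit) (p : Fin n × Fin n) => (if p.1 = p.2 then (1:ℂ) else 0)) := by
    ext p q
    simp [omegaM, Matrix.mul_apply, Matrix.conjTranspose_apply, apply_ite (starRingEnd ℂ)]
  rw [this]
  exact Matrix.posSemidef_conjTranspose_mul_self _

lemma blockAt_omegaM {n : ℕ} (a b : Fin n) :
    blockAt (omegaM n) a b = Matrix.single a b (1:ℂ) := by
  ext i j
  simp only [blockAt, omegaM, Matrix.of_apply, Matrix.single]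
  by_cases h1 : a = i <;> by_cases h2 : b = j <;> simp [h1, h2, eq_comm]

lemma matExtend_apply {n : ℕ} (Φ : Matrix (Fin n) (Fin n) ℂ →ₗ[ℂ] Matrix (Fin n) (Fin n) ℂ)
    (M : Matrix (Fin n × Fin n) (Fin n × Fin n) ℂ) (a b : Fin n) (i j : Fin n) :
    matExtend n Φ M (a, i) (b, j) = Φ (blockAt M a b) i j := by
  simp only [matExtend, Matrix.sum_apply, Matrix.kroneckerMap_apply, Matrix.single,
    Matrix.of_apply]
  rw [Finset.sum_eq_single a, Finset.sum_eq_single b]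
  · simp
  · intro c _ hc
    simp [hc]
  · simp
  · intro c _ hc
    rw [Finset.sum_eq_zero]
    intro d _
    simp [hc]
  · simp

lemma sum_rot {M : Type*} [AddCommMonoid M] {ι κ γ : Type*} [Fintype ι] [Fintype κ] [Fintype γ]
    (f : ι → κ → γ → M) :
    ∑ a : ι, ∑ b : κ, ∑ e : γ, f a b e = ∑ e : γ, ∑ a : ι, ∑ b : κ, f a b e := by
  calc ∑ a : ι, ∑ b : κ, ∑ e : γ, f a b e
      = ∑ a : ι, ∑ e : γ, ∑ b : κ, f a b e :=
        Finset.sum_congr rfl fun a _ => Finset.sum_comm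
    _ = ∑ e : γ, ∑ a : ι, ∑ b : κ, f a b e := Finset.sum_comm

lemma mul_mul_conjTranspose_apply {ι : Type*} [Fintype ι] (A ρ : Matrix ι ι ℂ) (i j : ι) :
    (A * ρ * Aᴴ) i j = ∑ a, ∑ b, A i a * ρ a b * star (A j b) := by
  simp only [Matrix.mul_apply, Matrix.conjTranspose_apply, Finset.sum_mul]
  rw [Finset.sum_comm]

/-- **Stinespring dilation.** Every quantum channel arises as a unitary evolution on a larger
system followed by a partial trace over the environment. -/
theorem stinespring_dilation {n : ℕ}
    (Φ : Matrix (Fin n) (Fin n) ℂ →ₗ[ℂ] Matrix (Fin n) (Fin n) ℂ)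
    (hCP : IsCompletelyPositive Φ) (hTP : IsTracePreserving Φ) :
    ∃ (m : ℕ), 1 ≤ m ∧
      ∃ (U : Matrix (Fin n × Fin m) (Fin n × Fin m) ℂ)
        (ρE : Matrix (Fin m) (Fin m) ℂ),
        Uᴴ * U = 1 ∧ U * Uᴴ = 1 ∧ ρE.PosSemidef ∧ ρE.trace = 1 ∧
        ∀ ρ : Matrix (Fin n) (Fin n) ℂ, Φ ρ = ptrace2 (U * (ρ ⊗ₖ ρE) * Uᴴ) := by
  rcases Nat.eq_zero_or_pos n with hn | hn
  · subst hn
    refine ⟨1, le_refl 1, 1, 1, by simp, by simp, Matrix.PosSemidef.one, by simp, ?_⟩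
    intro ρ
    ext i j
    exact i.elim0
  -- main case : 1 ≤ n
  have hC : (matExtend n Φ (omegaM n)).PosSemidef := hCP n hn (omegaM n) (omegaM_posSemidef n)
  set C := matExtend n Φ (omegaM n) with hCdef
  have hCe : ∀ a b i j, C (a, i) (b, j) = Φ (Matrix.single a b 1) i j := by
    intro a b i j
    rw [hCdef, matExtend_apply, blockAt_omegaM]
  set B := (open scoped MatrixOrder in CFC.sqrt C) with hBdef
  have hBH : Bᴴ = B := by open scoped MatrixOrder in exact (Matrix.nonneg_iff_posSemidef.mp (CFC.sqrt_nonneg C)).1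
  have hCBB : ∀ p q, C p q = ∑ r, star (B r p) * B r q := by
    intro p q
    have h : C = Bᴴ * B := by open scoped MatrixOrder in rw [hBH, CFC.sqrt_mul_sqrt_self C hC.nonneg]
    rw [h]
    simp [Matrix.mul_apply, Matrix.conjTranspose_apply]
  -- Kraus operators
  set K : Fin n × Fin n → Matrix (Fin n) (Fin n) ℂ :=
    fun e => Matrix.of fun i a => star (B e (a, i)) with hKdef
  have hPhiEntry : ∀ ρ i j, Φ ρ i j = ∑ a, ∑ b, ρ a b * Φ (Matrix.single a b 1) i j := by
    intro ρ i j
    conv_lhs => rw [Matrix.matrix_eq_sum_single ρ]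
    rw [map_sum, Matrix.sum_apply]
    refine Finset.sum_congr rfl fun a _ => ?_
    rw [map_sum, Matrix.sum_apply]
    refine Finset.sum_congr rfl fun b _ => ?_
    have h : Matrix.single a b (ρ a b) = ρ a b • Matrix.single a b (1:ℂ) := by
      rw [Matrix.smul_single, smul_eq_mul, mul_one]
    rw [h, map_smul, Matrix.smul_apply, smul_eq_mul]
  have hKraus : ∀ ρ, Φ ρ = ∑ e : Fin n × Fin n, K e * ρ * (K e)ᴴ := by
    intro ρ
    ext i j
    rw [hPhiEntry, Matrix.sum_apply]
    calc ∑ a, ∑ b, ρ a b * Φ (Matrix.single a b 1) i j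
        = ∑ a, ∑ b, ∑ e : Fin n × Fin n, K e i a * ρ a b * star (K e j b) := by
          refine Finset.sum_congr rfl fun a _ => Finset.sum_congr rfl fun b _ => ?_
          rw [← hCe, hCBB, Finset.mul_sum]
          refine Finset.sum_congr rfl fun e _ => ?_
          simp only [hKdef, Matrix.of_apply, star_star]
          ring
      _ = ∑ e : Fin n × Fin n, ∑ a, ∑ b, K e i a * ρ a b * star (K e j b) := sum_rot _
      _ = ∑ e : Fin n × Fin n, (K e * ρ * (K e)ᴴ) i j := by
          refine Finset.sum_congr rfl fun e _ => ?_
          rw [mul_mul_conjTranspose_apply]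
  -- trace preservation gives the isometry condition
  have hTPK : ∑ e : Fin n × Fin n, (K e)ᴴ * K e = (1 : Matrix (Fin n) (Fin n) ℂ) := by
    ext a b
    have htr := hTP (Matrix.single b a 1)
    have h1 : (Φ (Matrix.single b a 1)).trace
        = ∑ i, ∑ e : Fin n × Fin n, star (B e (b, i)) * B e (a, i) := by
      rw [Matrix.trace]
      refine Finset.sum_congr rfl fun i _ => ?_
      rw [Matrix.diag_apply, ← hCe, hCBB]
    have h2 : (Matrix.single b a (1:ℂ)).trace = if a = b then 1 else 0 := by
      simp only [Matrix.trace, Matrix.diag_apply, Matrix.single, Matrix.of_apply]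
      by_cases hab : a = b
      · subst hab
        simp
      · rw [if_neg hab, Finset.sum_eq_zero]
        intro x _
        rw [if_neg]
        rintro ⟨rfl, rfl⟩
        exact hab rfl
    rw [Matrix.sum_apply]
    have h3 : ∀ e : Fin n × Fin n, ((K e)ᴴ * K e) a b
        = ∑ i, star (B e (b, i)) * B e (a, i) := by
      intro e
      rw [Matrix.mul_apply]
      refine Finset.sum_congr rfl fun i _ => ?_
      simp only [Matrix.conjTranspose_apply, hKdef, Matrix.of_apply, star_star]
      ring
    simp_rw [h3]
    rw [Finset.sum_comm, ← h1, htr, h2, Matrix.one_apply]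
  -- environment dimension
  refine ⟨n * n, Nat.one_le_iff_ne_zero.mpr (by positivity), ?_⟩
  have hm0 : 0 < n * n := by positivity
  set m := n * n with hmdef
  set z0 : Fin m := ⟨0, hm0⟩ with hz0def
  set K' : Fin m → Matrix (Fin n) (Fin n) ℂ := fun k => K (finProdFinEquiv.symm k) with hK'def
  have hTPK' : ∑ k : Fin m, (K' k)ᴴ * K' k = (1 : Matrix (Fin n) (Fin n) ℂ) := by
    rw [← hTPK]
    exact Equiv.sum_comp finProdFinEquiv.symm (fun e => (K e)ᴴ * K e)
  have hKraus' : ∀ ρ, Φ ρ = ∑ k : Fin m, K' k * ρ * (K' k)ᴴ := by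
    intro ρ
    rw [hKraus ρ]
    exact (Equiv.sum_comp finProdFinEquiv.symm (fun e => K e * ρ * (K e)ᴴ)).symm
  -- the isometry columns
  set v : Fin n × Fin m → EuclideanSpace ℂ (Fin n × Fin m) :=
    fun p => WithLp.toLp 2 (fun r : Fin n × Fin m => K' r.2 r.1 p.1) with hvdef
  set s : Set (Fin n × Fin m) := {p | p.2 = z0} with hsdef
  have hinner : ∀ p q : Fin n × Fin m,
      (inner ℂ (v p) (v q) : ℂ) = (1 : Matrix (Fin n) (Fin n) ℂ) p.1 q.1 := by
    intro p q
    rw [← hTPK', PiLp.inner_apply]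
    rw [Matrix.sum_apply]
    rw [Fintype.sum_prod_type]
    rw [Finset.sum_comm]
    refine Finset.sum_congr rfl fun k _ => ?_
    rw [Matrix.mul_apply]
    refine Finset.sum_congr rfl fun i _ => ?_
    simp only [hvdef, RCLike.inner_apply, Matrix.conjTranspose_apply]
    exact mul_comm _ _
  have hvon : Orthonormal ℂ (s.restrict v) := by
    rw [orthonormal_iff_ite]
    rintro ⟨⟨a, e⟩, he⟩ ⟨⟨b, f⟩, hf⟩
    show inner ℂ (v (a, e)) (v (b, f)) = _
    rw [hinner]
    have he' : e = z0 := he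
    have hf' : f = z0 := hf
    subst he' hf'
    rw [Matrix.one_apply]
    by_cases hab : a = b
    · subst hab
      simp
    · rw [if_neg hab, if_neg]
      intro hcon
      exact hab (congrArg Prod.fst (Subtype.ext_iff.mp hcon))
  obtain ⟨bb, hbb⟩ := hvon.exists_orthonormalBasis_extension_of_card_eq
    (finrank_euclideanSpace (𝕜 := ℂ) (ι := Fin n × Fin m))
  set U : Matrix (Fin n × Fin m) (Fin n × Fin m) ℂ := Matrix.of fun r c => bb c r with hUdef
  have hU0 : ∀ (a : Fin n) (r : Fin n × Fin m), U r (a, z0) = K' r.2 r.1 a := by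
    intro a r
    have : bb (a, z0) = v (a, z0) := hbb (a, z0) rfl
    simp only [hUdef, Matrix.of_apply, this, hvdef]
  have hUU : Uᴴ * U = 1 := by
    ext p q
    have := (orthonormal_iff_ite.mp bb.orthonormal) p q
    rw [PiLp.inner_apply] at this
    simp only [RCLike.inner_apply] at this
    rw [Matrix.mul_apply, Matrix.one_apply]
    simpa [hUdef, Matrix.conjTranspose_apply, mul_comm] using this
  refine ⟨U, Matrix.single z0 z0 (1:ℂ), hUU, mul_eq_one_comm.mp hUU, ?_, ?_, ?_⟩
  · -- PSD of ρE
    have h : Matrix.single z0 z0 (1:ℂ) =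
        (Matrix.of fun (_ : Unit) (k : Fin m) => if z0 = k then (1:ℂ) else 0)ᴴ *
        (Matrix.of fun (_ : Unit) (k : Fin m) => if z0 = k then (1:ℂ) else 0) := by
      ext p q
      simp only [Matrix.mul_apply, Matrix.conjTranspose_apply, Matrix.of_apply,
        Matrix.single, Finset.univ_unique, Finset.sum_singleton,
        apply_ite (starRingEnd ℂ), map_one, map_zero]
      by_cases h1 : z0 = p <;> by_cases h2 : z0 = q <;> simp [h1, h2]
    rw [h]
    exact Matrix.posSemidef_conjTranspose_mul_self _
  · -- trace of ρE
    rw [Matrix.trace]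
    simp [Matrix.diag, Matrix.single]
  · -- the dilation identity
    intro ρ
    rw [hKraus']
    ext i j
    simp only [ptrace2, Matrix.of_apply, Matrix.sum_apply]
    refine Finset.sum_congr rfl fun k _ => ?_
    rw [mul_mul_conjTranspose_apply]
    set X := ρ ⊗ₖ Matrix.single z0 z0 (1:ℂ) with hXdef
    have hX : ∀ p q : Fin n × Fin m,
        X p q = ρ p.1 q.1 * (if z0 = p.2 ∧ z0 = q.2 then 1 else 0) := by
      intro p q
      simp [hXdef, Matrix.kroneckerMap_apply, Matrix.single]
    rw [mul_mul_conjTranspose_apply, Fintype.sum_prod_type]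
    symm
    refine Finset.sum_congr rfl fun a _ => ?_
    have houter : ∑ e : Fin m, ∑ q : Fin n × Fin m,
        U (i, k) (a, e) * X (a, e) q * star (U (j, k) q)
        = ∑ q : Fin n × Fin m, U (i, k) (a, z0) * X (a, z0) q * star (U (j, k) q) := by
      refine Finset.sum_eq_single_of_mem z0 (Finset.mem_univ z0) fun e _ he => ?_
      refine Finset.sum_eq_zero fun q _ => ?_
      rw [hX]
      simp [Ne.symm he]
    rw [houter, Fintype.sum_prod_type]
    refine Finset.sum_congr rfl fun b _ => ?_
    have hinner2 : ∑ f : Fin m, U (i, k) (a, z0) * X (a, z0) (b, f) * star (U (j, k) (b, f))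
        = U (i, k) (a, z0) * X (a, z0) (b, z0) * star (U (j, k) (b, z0)) := by
      refine Finset.sum_eq_single_of_mem z0 (Finset.mem_univ z0) fun f _ hf => ?_
      rw [hX]
      simp [Ne.symm hf]
    rw [hinner2, hU0, hU0, hX]
    simp
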